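/- For every positive integer $k$, $\sum_{n=1}^{\infty} \frac{\zeta_n(2)}{n(n+k)} = \frac{1}{k}\left\{ \zeta(3) + \zeta(2) H_{k-1} - \sum_{i=1}^{k-1} \frac{H_i}{i^2} \right\}$. -/

import Mathlib

open Finset Filter Topology

noncomputable def H (n : ℕ) : ℝ := ∑ j ∈ Finset.Icc 1 n, (1 : ℝ) / j

noncomputable def zh (m n : ℕ) : ℝ := ∑ j ∈ Finset.Icc 1 n, (1 : ℝ) / (j : ℝ) ^ m

noncomputable def Z (s : ℕ) : ℝ := ∑' n : ℕ, 1 / ((n : ℝ) + 1) ^ s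

lemma H_eq (n : ℕ) : H n = ∑ j ∈ range n, (1:ℝ)/((j:ℝ)+1) := by
  rw [H, ← Finset.Ico_add_one_right_eq_Icc, Finset.sum_Ico_eq_sum_range]
  simp [add_comm]

lemma zh2_eq (n : ℕ) : zh 2 n = ∑ j ∈ range n, (1:ℝ)/((j:ℝ)+1)^2 := by
  rw [zh, ← Finset.Ico_add_one_right_eq_Icc, Finset.sum_Ico_eq_sum_range]
  simp [add_comm]

lemma H_succ (n : ℕ) : H (n+1) = H n + 1/((n:ℝ)+1) := by
  rw [H_eq, H_eq, Finset.sum_range_succ]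

lemma summable_q : Summable (fun j : ℕ => 1/((j:ℝ)+1)^2) := by
  have h0 : Summable (fun n : ℕ => 1/(n:ℝ)^2) :=
    Real.summable_one_div_nat_pow.mpr one_lt_two
  have h1 := (summable_nat_add_iff 1).mpr h0
  exact h1.congr fun n => by push_cast; ring

lemma hasSum_q : HasSum (fun j : ℕ => 1/((j:ℝ)+1)^2) (Z 2) := by
  simpa [Z] using summable_q.hasSum

lemma hasSum_tele (c : ℕ → ℝ) (hm : ∀ n, c (n+1) ≤ c n)
    (h0 : Tendsto c atTop (𝓝 0)) :
    HasSum (fun n => c n - c (n+1)) (c 0) := by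
  rw [hasSum_iff_tendsto_nat_of_nonneg (fun n => sub_nonneg.2 (hm n))]
  have he : ∀ N : ℕ, ∑ i ∈ range N, (c i - c (i+1)) = c 0 - c N :=
    fun N => Finset.sum_range_sub' c N
  simp only [he]
  simpa using tendsto_const_nhds.sub h0

lemma tend0 (a : ℝ) : Tendsto (fun n : ℕ => 1/((n:ℝ) + a)) atTop (𝓝 0) := by
  simp only [one_div]
  exact (tendsto_atTop_add_const_right atTop a tendsto_natCast_atTop_atTop).inv_tendsto_atTop

lemma tele_cc (a : ℝ) (ha : 0 < a) :
    HasSum (fun n : ℕ => 1/(((n:ℝ)+a)*((n:ℝ)+a+1))) (1/a) := by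
  have h := hasSum_tele (fun n : ℕ => 1/((n:ℝ)+a))
    (fun n => by
      push_cast
      apply one_div_le_one_div_of_le (by positivity)
      linarith)
    (tend0 a)
  simp only [Nat.cast_zero, zero_add] at h
  have heq : (fun n : ℕ => 1/(((n:ℝ)+a)*((n:ℝ)+a+1)))
      = fun n : ℕ => 1/((n:ℝ)+a) - 1/(((n+1:ℕ):ℝ)+a) := by
    funext n
    have h1 : ((n:ℝ)+a) ≠ 0 := by positivity
    have h2 : ((n:ℝ)+a+1) ≠ 0 := by positivity
    push_cast
    rw [show (n:ℝ) + 1 + a = (n:ℝ) + a + 1 by ring, div_sub_div _ _ h1 h2]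
    field_simp
    ring
  rw [heq]
  exact h

noncomputable def Lam (k : ℕ) : ℝ :=
  ∑' j : ℕ, (1/((j:ℝ)+1)^2) * (1/((j:ℝ)+1+k))

noncomputable def Fk (k : ℕ) (p : ℕ × ℕ) : ℝ :=
  if p.1 ≤ p.2 then (1/((p.1:ℝ)+1)^2) * (1/(((p.2:ℝ)+1+k)*((p.2:ℝ)+2+k))) else 0

lemma Fk_nonneg (k : ℕ) (p : ℕ × ℕ) : 0 ≤ Fk k p := by
  unfold Fk
  split
  · positivity
  · exact le_rfl

lemma hcol (k j : ℕ) :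
    HasSum (fun n => Fk k (j, n)) ((1/((j:ℝ)+1)^2) * (1/((j:ℝ)+1+k))) := by
  have h := (tele_cc ((j:ℝ)+1+k) (by positivity)).mul_left (1/((j:ℝ)+1)^2)
  have he : (fun n : ℕ =>
        (1/((j:ℝ)+1)^2) * (1/(((n:ℝ)+((j:ℝ)+1+k))*(((n:ℝ)+((j:ℝ)+1+k))+1))))
      = fun n : ℕ => Fk k (j, n + j) := by
    funext n
    show _ = if j ≤ n + j then (1/((j:ℝ)+1)^2) * (1/(((((n+j:ℕ)):ℝ)+1+k)*(((n+j:ℕ):ℝ)+2+k))) else 0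
    rw [if_pos (Nat.le_add_left j n)]
    push_cast
    ring_nf
  rw [he] at h
  have h2 := (hasSum_nat_add_iff (f := fun n => Fk k (j, n)) j).1 h
  have hz : ∑ i ∈ range j, Fk k (j, i) = 0 :=
    Finset.sum_eq_zero fun i hi => by
      simp [Fk, Nat.not_le.mpr (Finset.mem_range.1 hi)]
  rw [hz, add_zero] at h2
  exact h2

lemma hrow (k n : ℕ) :
    HasSum (fun j => Fk k (j, n))
      (zh 2 (n+1) * (1/(((n:ℝ)+1+k)*((n:ℝ)+2+k)))) := by
  have h0 : ∀ j ∉ range (n+1), Fk k (j, n) = 0 := by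
    intro j hj
    have : ¬ j ≤ n := by
      simp only [Finset.mem_range] at hj
      omega
    simp [Fk, this]
  have h := hasSum_sum_of_ne_finset_zero (L := SummationFilter.unconditional ℕ) h0
  convert h using 1
  rw [zh2_eq, Finset.sum_mul]
  refine Finset.sum_congr rfl fun j hj => ?_
  simp only [Fk, if_pos (Nat.lt_succ_iff.1 (Finset.mem_range.1 hj))]

lemma summable_Fk (k : ℕ) : Summable (Fk k) := by
  rw [summable_prod_of_nonneg (fun p => Fk_nonneg k p)]
  refine ⟨fun j => (hcol k j).summable, ?_⟩
  apply Summable.of_nonneg_of_le (f := fun j : ℕ => 1/((j:ℝ)+1)^2)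
      (fun j => tsum_nonneg fun n => Fk_nonneg k (j, n)) ?_ summable_q
  intro j
  rw [(hcol k j).tsum_eq]
  have h1 : (1:ℝ)/((j:ℝ)+1+k) ≤ 1 := by
    rw [div_le_one (by positivity)]
    have : (0:ℝ) ≤ (j:ℝ) := Nat.cast_nonneg j
    have : (0:ℝ) ≤ (k:ℝ) := Nat.cast_nonneg k
    linarith [Nat.cast_nonneg (α := ℝ) j]
  calc (1/((j:ℝ)+1)^2) * (1/((j:ℝ)+1+k)) ≤ (1/((j:ℝ)+1)^2) * 1 :=
        mul_le_mul_of_nonneg_left h1 (by positivity)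
    _ = 1/((j:ℝ)+1)^2 := mul_one _

set_option maxHeartbeats 2000000 in
lemma key (k : ℕ) :
    HasSum (fun n : ℕ => zh 2 (n+1) * (1/(((n:ℝ)+1+k)*((n:ℝ)+2+k)))) (Lam k) := by
  have hs := (summable_Fk k).hasSum
  have h1 : HasSum (fun j : ℕ => (1/((j:ℝ)+1)^2) * (1/((j:ℝ)+1+k))) (∑' p, Fk k p) :=
    hs.prod_fiberwise (hcol k)
  have hswap : HasSum (fun p : ℕ × ℕ => Fk k (p.2, p.1)) (∑' p, Fk k p) :=
    ((Equiv.prodComm ℕ ℕ).hasSum_iff).2 hs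
  have h2 : HasSum (fun n : ℕ => zh 2 (n+1) * (1/(((n:ℝ)+1+k)*((n:ℝ)+2+k)))) (∑' p, Fk k p) :=
    hswap.prod_fiberwise (fun n => hrow k n)
  rwa [← h1.tsum_eq] at h2

lemma Lam_zero : Lam 0 = Z 3 := by
  unfold Lam Z
  refine tsum_congr fun j => ?_
  have h1 : ((j:ℝ)+1) ≠ 0 := by positivity
  push_cast
  field_simp
  ring

lemma hasSum_Hk (k : ℕ) (hk : 0 < k) :
    HasSum (fun n : ℕ => 1/(((n:ℝ)+1)*((n:ℝ)+1+k))) (H k / k) := by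
  have hK : 0 < (k:ℝ) := by exact_mod_cast hk
  set f : ℕ → ℝ := fun m => 1/((m:ℝ)+1) with hf
  have hnn : ∀ n : ℕ, 0 ≤ f n - f (n+k) := by
    intro n
    have h1 : f (n+k) ≤ f n := by
      rw [hf]
      simp only
      apply one_div_le_one_div_of_le (by positivity)
      push_cast
      linarith [Nat.cast_nonneg (α := ℝ) k]
    linarith
  have hdiff : HasSum (fun n => f n - f (n+k)) (H k) := by
    rw [hasSum_iff_tendsto_nat_of_nonneg hnn]
    have hpart : ∀ N : ℕ, ∑ i ∈ range N, (f i - f (i+k))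
        = (∑ i ∈ range k, f i) - ∑ i ∈ range k, f (N+i) := by
      intro N
      rw [Finset.sum_sub_distrib]
      have e1 : ∑ i ∈ range N, f (i+k) = ∑ i ∈ range N, f (k+i) :=
        Finset.sum_congr rfl fun i _ => by rw [add_comm]
      have e2 := Finset.sum_range_add f k N
      have e3 := Finset.sum_range_add f N k
      have e4 : ∑ x ∈ range (k+N), f x = ∑ x ∈ range (N+k), f x := by rw [add_comm]
      rw [e1]
      linarith [e2, e3, e4]
    simp only [hpart]
    have hlim : Tendsto (fun N : ℕ => ∑ i ∈ range k, f (N+i)) atTop (𝓝 0) := by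
      have h0 : ∀ i ∈ range k, Tendsto (fun N : ℕ => f (N+i)) atTop (𝓝 0) := by
        intro i _
        refine (tend0 ((i:ℝ)+1)).congr fun N => ?_
        rw [hf]
        simp only
        push_cast
        ring_nf
      have hsum := tendsto_finset_sum (range k) h0
      simpa using hsum
    have : H k = ∑ i ∈ range k, f i := H_eq k
    rw [this]
    simpa using tendsto_const_nhds.sub hlim
  have h := hdiff.mul_left (1/(k:ℝ))
  have heq : (fun n : ℕ => (1/(k:ℝ)) * (f n - f (n+k)))
      = fun n : ℕ => 1/(((n:ℝ)+1)*((n:ℝ)+1+k)) := by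
    funext n
    rw [hf]
    simp only
    have h1 : ((n:ℝ)+1) ≠ 0 := by positivity
    push_cast
    rw [div_sub_div _ _ h1 (by positivity), div_mul_div_comm,
      div_eq_div_iff (by positivity) (by positivity)]
    ring
  rw [heq] at h
  rw [show H k / (k:ℝ) = 1/(k:ℝ) * H k by ring]
  exact h

lemma Lam_pos (k : ℕ) (hk : 0 < k) : Lam k = Z 2 / k - H k / k^2 := by
  have hK : 0 < (k:ℝ) := by exact_mod_cast hk
  have h := (hasSum_q.mul_left (1/(k:ℝ))).sub ((hasSum_Hk k hk).mul_left (1/(k:ℝ)))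
  have heq : (fun j : ℕ => (1/(k:ℝ)) * (1/((j:ℝ)+1)^2)
        - (1/(k:ℝ)) * (1/(((j:ℝ)+1)*((j:ℝ)+1+k))))
      = fun j : ℕ => (1/((j:ℝ)+1)^2) * (1/((j:ℝ)+1+k)) := by
    funext j
    rw [div_mul_div_comm, div_mul_div_comm, div_sub_div _ _ (by positivity) (by positivity),
      div_mul_div_comm, div_eq_div_iff (by positivity) (by positivity)]
    ring
  rw [heq] at h
  rw [Lam, h.tsum_eq]
  ring

lemma Uind (k : ℕ) :
    HasSum (fun n : ℕ => zh 2 (n+1) * (1/((n:ℝ)+1) - 1/((n:ℝ)+1+(k:ℝ))))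
      (∑ i ∈ range k, Lam i) := by
  induction k with
  | zero =>
    have he : (fun n : ℕ => zh 2 (n+1) * (1/((n:ℝ)+1) - 1/((n:ℝ)+1+((0:ℕ):ℝ))))
        = fun _ : ℕ => (0:ℝ) := by
      funext n
      norm_num
    rw [he]
    simpa using hasSum_zero
  | succ k ih =>
    have h := ih.add (key k)
    rw [Finset.sum_range_succ]
    have he : (fun n : ℕ => zh 2 (n+1) * (1/((n:ℝ)+1) - 1/((n:ℝ)+1+((k+1:ℕ):ℝ))))
        = fun n : ℕ => zh 2 (n+1) * (1/((n:ℝ)+1) - 1/((n:ℝ)+1+(k:ℝ)))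
            + zh 2 (n+1) * (1/(((n:ℝ)+1+k)*((n:ℝ)+2+k))) := by
      funext n
      have h1 : ((n:ℝ)+1+k) ≠ 0 := by positivity
      have h2 : ((n:ℝ)+2+k) ≠ 0 := by positivity
      have key2 : 1/((n:ℝ)+1+k) - 1/((n:ℝ)+2+k) = 1/(((n:ℝ)+1+k)*((n:ℝ)+2+k)) := by
        rw [div_sub_div _ _ h1 h2]
        congr 1
        ring
      push_cast
      rw [show (n:ℝ)+1+((k:ℝ)+1) = (n:ℝ)+2+(k:ℝ) by ring, ← mul_add]
      congr 1
      linarith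
    rw [he]
    exact h

lemma sumLam (k : ℕ) : ∑ i ∈ range (k+1), Lam i
    = Z 3 + Z 2 * H k - ∑ i ∈ Finset.Icc 1 k, H i / (i:ℝ)^2 := by
  induction k with
  | zero => simp [Lam_zero, H]
  | succ k ih =>
    rw [Finset.sum_range_succ, ih, Lam_pos (k+1) (Nat.succ_pos k),
        Finset.sum_Icc_succ_top (Nat.succ_le_succ (Nat.zero_le k)), H_succ]
    push_cast
    ring

theorem stmt2 (k : ℕ) (hk : 0 < k) :
    ∑' n : ℕ, zh 2 (n + 1) / (((n : ℝ) + 1) * ((n : ℝ) + 1 + k)) =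
      (1 / (k : ℝ)) *
        (Z 3 + Z 2 * H (k - 1) - ∑ i ∈ Finset.Icc 1 (k - 1), H i / (i : ℝ) ^ 2) := by
  have hK : (0:ℝ) < k := by exact_mod_cast hk
  have hpt : ∀ n : ℕ, zh 2 (n+1) / (((n:ℝ)+1) * ((n:ℝ)+1+k))
      = (1/(k:ℝ)) * (zh 2 (n+1) * (1/((n:ℝ)+1) - 1/((n:ℝ)+1+(k:ℝ)))) := by
    intro n
    have h1 : ((n:ℝ)+1) ≠ 0 := by positivity
    have h2 : ((n:ℝ)+1+k) ≠ 0 := by positivity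
    have h3 : (k:ℝ) ≠ 0 := hK.ne'
    field_simp
    ring
  calc ∑' n : ℕ, zh 2 (n + 1) / (((n : ℝ) + 1) * ((n : ℝ) + 1 + k))
      = ∑' n : ℕ, (1/(k:ℝ)) * (zh 2 (n+1) * (1/((n:ℝ)+1) - 1/((n:ℝ)+1+(k:ℝ)))) :=
        tsum_congr hpt
    _ = (1/(k:ℝ)) * ∑' n : ℕ, zh 2 (n+1) * (1/((n:ℝ)+1) - 1/((n:ℝ)+1+(k:ℝ))) :=
        tsum_mul_left
    _ = (1/(k:ℝ)) * (∑ i ∈ range k, Lam i) := by rw [(Uind k).tsum_eq]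
    _ = (1 / (k : ℝ)) *
        (Z 3 + Z 2 * H (k - 1) - ∑ i ∈ Finset.Icc 1 (k - 1), H i / (i : ℝ) ^ 2) := by
      obtain ⟨m, rfl⟩ := Nat.exists_eq_succ_of_ne_zero hk.ne'
      simp only [Nat.succ_sub_one]
      rw [sumLam m]
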